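/- For every p ∈ (0, ∞), the function x ↦ s₁(x)^p + s₂(x)^p is even and strictly increasing on [0, ∞); moreover s₁ itself is even and strictly increasing on [0, ∞) with s₁(0) = 1. Consequently, the Schatten-p quasi-norm of W_x over the solution set S — equal to (s₁(x)^p + s₂(x)^p)^{1/p} for 0 < p < ∞ and to s₁(x) for p = ∞ — attains its minimum over x ∈ ℝ if and only if x = 0. -/

import Mathlib

/-- The first (largest) singular value of `W_x = [[x,1],[1,0]]`. -/
noncomputable def s1 (x : ℝ) : ℝ := (Real.sqrt (x ^ 2 + 4) + |x|) / 2

/-- The second (smallest) singular value of `W_x = [[x,1],[1,0]]`. -/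
noncomputable def s2 (x : ℝ) : ℝ := (Real.sqrt (x ^ 2 + 4) - |x|) / 2

lemma s1_even (x : ℝ) : s1 (-x) = s1 x := by simp [s1, neg_pow]

lemma s2_even (x : ℝ) : s2 (-x) = s2 x := by simp [s2, neg_pow]

lemma s1_one_le (x : ℝ) : 1 ≤ s1 x := by
  have h : (2:ℝ) ≤ Real.sqrt (x ^ 2 + 4) := by
    rw [show (2:ℝ) = Real.sqrt 4 by rw [show (4:ℝ) = 2^2 by norm_num, Real.sqrt_sq]; norm_num]
    exact Real.sqrt_le_sqrt (by nlinarith [sq_nonneg x])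
  have := abs_nonneg x
  unfold s1; linarith

lemma s1_pos (x : ℝ) : 0 < s1 x := lt_of_lt_of_le one_pos (s1_one_le x)

lemma s2_eq (x : ℝ) : s2 x = (s1 x)⁻¹ := by
  have h4 : (0:ℝ) ≤ x ^ 2 + 4 := by positivity
  have hs : Real.sqrt (x ^ 2 + 4) ^ 2 = x ^ 2 + 4 := Real.sq_sqrt h4
  have h1 : s1 x ≠ 0 := ne_of_gt (s1_pos x)
  have hmul : s1 x * s2 x = 1 := by
    unfold s1 s2
    have : |x| ^ 2 = x ^ 2 := sq_abs x
    field_simp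
    nlinarith
  exact (inv_eq_of_mul_eq_one_right hmul).symm

lemma s1_mono : StrictMonoOn s1 (Set.Ici 0) := by
  intro a ha b hb hab
  simp only [Set.mem_Ici] at ha hb
  have h1 : Real.sqrt (a ^ 2 + 4) ≤ Real.sqrt (b ^ 2 + 4) :=
    Real.sqrt_le_sqrt (by nlinarith)
  have h2 : |a| < |b| := by rw [abs_of_nonneg ha, abs_of_nonneg (le_of_lt (lt_of_le_of_lt ha hab))]; exact hab
  unfold s1; linarith

lemma core (p : ℝ) (hp : 0 < p) {a b : ℝ} (ha : 1 ≤ a) (hab : a < b) :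
    a ^ p + a⁻¹ ^ p < b ^ p + b⁻¹ ^ p := by
  have ha0 : (0:ℝ) < a := lt_of_lt_of_le one_pos ha
  have hb0 : (0:ℝ) < b := lt_trans ha0 hab
  rw [Real.inv_rpow ha0.le, Real.inv_rpow hb0.le]
  have hA : (1:ℝ) ≤ a ^ p := Real.one_le_rpow ha hp.le
  have hAB : a ^ p < b ^ p := Real.rpow_lt_rpow ha0.le hab hp
  set A := a ^ p; set B := b ^ p
  have hA0 : (0:ℝ) < A := lt_of_lt_of_le one_pos hA
  have hB0 : (0:ℝ) < B := lt_trans hA0 hAB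
  have h1 : A⁻¹ - B⁻¹ = (B - A) / (A * B) := by field_simp
  have hd : (0:ℝ) < B - A := by linarith
  have hab1 : (1:ℝ) < A * B := by nlinarith
  have h2 : (B - A) / (A * B) < B - A := div_lt_self hd hab1
  rw [← h1] at h2
  linarith

lemma comp_mono (p : ℝ) (hp : 0 < p) :
    StrictMonoOn (fun x : ℝ => s1 x ^ p + s2 x ^ p) (Set.Ici 0) := by
  intro a ha b hb hab
  simp only
  rw [s2_eq a, s2_eq b]
  exact core p hp (s1_one_le a) (s1_mono ha hb hab)

/-- **Schatten-p (quasi-)norms over the solution set are minimized exactly at `x = 0`.**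
For every `p ∈ (0,∞)` the map `x ↦ s₁(x)^p + s₂(x)^p` is even and strictly increasing
on `[0,∞)`; moreover `s₁` itself is even, strictly increasing on `[0,∞)`, with `s₁(0) = 1`.
Consequently the Schatten-p quasi-norm of `W_x`, equal to `(s₁(x)^p + s₂(x)^p)^(1/p)`
for `0 < p < ∞` and to `s₁(x)` for `p = ∞`, attains its minimum over `x ∈ ℝ`
if and only if `x = 0`. -/
theorem schatten_p_minimized_iff_zero (p : ℝ) (hp : 0 < p) :
    (∀ x : ℝ, s1 (-x) ^ p + s2 (-x) ^ p = s1 x ^ p + s2 x ^ p) ∧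
    StrictMonoOn (fun x : ℝ => s1 x ^ p + s2 x ^ p) (Set.Ici 0) ∧
    (∀ x : ℝ, s1 (-x) = s1 x) ∧
    StrictMonoOn s1 (Set.Ici 0) ∧
    s1 0 = 1 ∧
    (∀ x : ℝ,
      (∀ y : ℝ, (s1 x ^ p + s2 x ^ p) ^ (1 / p) ≤ (s1 y ^ p + s2 y ^ p) ^ (1 / p)) ↔
        x = 0) ∧
    (∀ x : ℝ, (∀ y : ℝ, s1 x ≤ s1 y) ↔ x = 0) := by
  have hs10 : s1 0 = 1 := by
    unfold s1
    rw [show (0:ℝ)^2 + 4 = 2^2 by norm_num, Real.sqrt_sq (by norm_num)]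
    norm_num
  have habs : ∀ x : ℝ, s1 |x| = s1 x := by
    intro x
    rcases abs_choice x with h | h
    · rw [h]
    · rw [h, s1_even]
  have habs2 : ∀ x : ℝ, s2 |x| = s2 x := by
    intro x
    rcases abs_choice x with h | h
    · rw [h]
    · rw [h, s2_even]
  set f : ℝ → ℝ := fun x => s1 x ^ p + s2 x ^ p with hf
  have hf_even : ∀ x, f |x| = f x := by
    intro x; simp only [hf, habs, habs2]
  have hfpos : ∀ x, 0 < f x := by
    intro x
    have := Real.rpow_pos_of_pos (s1_pos x) p
    have h2 : 0 < s2 x := by rw [s2_eq]; exact inv_pos.mpr (s1_pos x)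
    have := Real.rpow_pos_of_pos h2 p
    simp only [hf]; linarith
  refine ⟨fun x => by rw [s1_even, s2_even], comp_mono p hp, s1_even, s1_mono, hs10, ?_, ?_⟩
  · intro x
    constructor
    · intro h
      by_contra hx
      have hx' : 0 < |x| := abs_pos.mpr hx
      have hlt : f 0 < f x := by
        rw [← hf_even x]
        exact comp_mono p hp (Set.mem_Ici.mpr (le_refl 0)) (le_of_lt hx') hx'
      have hlt2 : f 0 ^ (1/p) < f x ^ (1/p) :=
        Real.rpow_lt_rpow (hfpos 0).le hlt (by positivity)
      have := h 0
      simp only [hf] at hlt2 this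
      linarith
    · intro h y
      subst h
      have hle : f 0 ≤ f y := by
        rw [← hf_even y]
        exact (comp_mono p hp).monotoneOn (Set.mem_Ici.mpr (le_refl 0)) (Set.mem_Ici.mpr (abs_nonneg y)) (abs_nonneg y)
      exact Real.rpow_le_rpow (hfpos 0).le hle (by positivity)
  · intro x
    constructor
    · intro h
      by_contra hx
      have hx' : 0 < |x| := abs_pos.mpr hx
      have hlt : s1 0 < s1 x := by
        rw [← habs x]; exact s1_mono (Set.mem_Ici.mpr (le_refl 0)) (le_of_lt hx') hx'
      linarith [h 0]
    · intro h y
      subst h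
      rw [← habs y]
      exact s1_mono.monotoneOn (Set.mem_Ici.mpr (le_refl 0)) (Set.mem_Ici.mpr (abs_nonneg y)) (abs_nonneg y)
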